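/- Fix R > 0, c > 0, γ ∈ ℝ, and α0, β0 > 0, and consider the private-sampling game defined in the context. The profile with q0 = q1 = 0 and σ_D(p) = 0 for all p ∈ [0,1] is a pure-strategy equilibrium if and only if (γ − (α0 + θ)/(α0 + β0 + 1))·R ≥ c for every θ ∈ {0,1}, equivalently if and only if (γ − (α0 + 1)/(α0 + β0 + 1))·R ≥ c. -/
import Mathlib


open intervalIntegral

/-- The Beta function `B(a,b) = ∫_0^1 t^(a−1)(1−t)^(b−1) dt`. -/
noncomputable def betaFn (a b : ℝ) : ℝ :=
  ∫ t in (0:ℝ)..1, t ^ (a - 1) * (1 - t) ^ (b - 1)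

/-- The regularized incomplete Beta function
`I_x(a,b) = (∫_0^x t^(a−1)(1−t)^(b−1) dt) / B(a,b)`. -/
noncomputable def regIncBeta (x a b : ℝ) : ℝ :=
  (∫ t in (0:ℝ)..x, t ^ (a - 1) * (1 - t) ^ (b - 1)) / betaFn a b

/-- The attacker's posterior mean `m(θ) = (α0+θ)/(α0+β0+1)`. -/
noncomputable def postMean (α0 β0 θ : ℝ) : ℝ := (α0 + θ) / (α0 + β0 + 1)

/-- The attacker's conditional expectation of the defender's strategy,
`E_D(θ) = (∫_0^1 σ_D(p)·p^(α0+θ−1)(1−p)^(β0−θ) dp) / B(α0+θ, β0+1−θ)`. -/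
noncomputable def expDef (α0 β0 θ : ℝ) (σD : ℝ → ℝ) : ℝ :=
  (∫ p in (0:ℝ)..1, σD p * (p ^ (α0 + θ - 1) * (1 - p) ^ (β0 - θ)))
    / betaFn (α0 + θ) (β0 + 1 - θ)

/-- The attacker's (reduced) objective given sample `θ`:
`σ ↦ σ·((m(θ) − γ)R + c·(1 − 2E_D(θ)))`. -/
noncomputable def attackerObj (R c γ α0 β0 θ : ℝ) (σD : ℝ → ℝ) (σ : ℝ) : ℝ :=
  σ * ((postMean α0 β0 θ - γ) * R + c * (1 - 2 * expDef α0 β0 θ σD))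

/-- `(q0, q1, σ_D)` is a pure-strategy equilibrium of the private-sampling game:
all strategies are probabilities, `q_θ` maximizes the attacker's objective for each
sample `θ ∈ {0,1}`, and for every `p ∈ [0,1]` with `p ≠ 1/2`, `σ_D(p)` minimizes
the defender's objective `σ ↦ σ·(1 − 2((1−p)q0 + p·q1))`. -/
def IsPureEq (R c γ α0 β0 : ℝ) (q0 q1 : ℝ) (σD : ℝ → ℝ) : Prop :=
  q0 ∈ Set.Icc (0:ℝ) 1 ∧ q1 ∈ Set.Icc (0:ℝ) 1
    ∧ (∀ p ∈ Set.Icc (0:ℝ) 1, σD p ∈ Set.Icc (0:ℝ) 1)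
    ∧ (∀ σ ∈ Set.Icc (0:ℝ) 1,
        attackerObj R c γ α0 β0 0 σD σ ≤ attackerObj R c γ α0 β0 0 σD q0)
    ∧ (∀ σ ∈ Set.Icc (0:ℝ) 1,
        attackerObj R c γ α0 β0 1 σD σ ≤ attackerObj R c γ α0 β0 1 σD q1)
    ∧ (∀ p ∈ Set.Icc (0:ℝ) 1, p ≠ 1/2 → ∀ σ ∈ Set.Icc (0:ℝ) 1,
        σD p * (1 - 2 * ((1 - p) * q0 + p * q1))
          ≤ σ * (1 - 2 * ((1 - p) * q0 + p * q1)))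

/-- region 2 of Lemma 2: both players choosing target `b`
(`q0 = q1 = 0`, `σ_D ≡ 0`) is a pure-strategy equilibrium iff
`(γ − (α0+θ)/(α0+β0+1))R ≥ c` for every `θ ∈ {0,1}`, equivalently iff
`(γ − (α0+1)/(α0+β0+1))R ≥ c`. -/
theorem region_two (R c γ α0 β0 : ℝ)
    (hR : 0 < R) (hc : 0 < c) (hα : 0 < α0) (hβ : 0 < β0) :
    (IsPureEq R c γ α0 β0 0 0 (fun _ => 0)
      ↔ ∀ θ ∈ ({0, 1} : Set ℝ), (γ - (α0 + θ) / (α0 + β0 + 1)) * R ≥ c)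
    ∧ ((∀ θ ∈ ({0, 1} : Set ℝ), (γ - (α0 + θ) / (α0 + β0 + 1)) * R ≥ c)
      ↔ (γ - (α0 + 1) / (α0 + β0 + 1)) * R ≥ c) := by
  have hden : (0:ℝ) < α0 + β0 + 1 := by linarith
  have hE : ∀ θ : ℝ, expDef α0 β0 θ (fun _ => 0) = 0 := by
    intro θ; simp [expDef]
  have hobj : ∀ θ σ : ℝ, attackerObj R c γ α0 β0 θ (fun _ => 0) σ
      = σ * ((postMean α0 β0 θ - γ) * R + c) := by
    intro θ σ; simp [attackerObj, hE]
  have hmax : ∀ θ : ℝ,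
      (∀ σ ∈ Set.Icc (0:ℝ) 1,
        attackerObj R c γ α0 β0 θ (fun _ => 0) σ
          ≤ attackerObj R c γ α0 β0 θ (fun _ => 0) 0)
      ↔ (γ - postMean α0 β0 θ) * R ≥ c := by
    intro θ
    constructor
    · intro h
      have := h 1 (by constructor <;> norm_num)
      rw [hobj, hobj] at this
      nlinarith
    · intro h σ hσ
      rw [hobj, hobj]
      have hK : (postMean α0 β0 θ - γ) * R + c ≤ 0 := by nlinarith
      nlinarith [hσ.1, hσ.2]
  have hmono : (γ - postMean α0 β0 1) * R ≥ c → (γ - postMean α0 β0 0) * R ≥ c := by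
    intro h
    have hm : postMean α0 β0 0 ≤ postMean α0 β0 1 := by
      unfold postMean
      gcongr <;> linarith
    nlinarith
  constructor
  · constructor
    · rintro ⟨-, -, -, h0, h1, -⟩ θ hθ
      rcases hθ with rfl | hθ
      · rw [show (γ - (α0 + 0) / (α0 + β0 + 1)) * R = (γ - postMean α0 β0 0) * R from rfl]
        exact (hmax 0).mp h0
      · rcases hθ with rfl
        exact (hmax 1).mp h1
    · intro h
      refine ⟨⟨le_refl _, by norm_num⟩, ⟨le_refl _, by norm_num⟩,
        fun p _ => ⟨le_refl _, by norm_num⟩,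
        (hmax 0).mpr (h 0 (by left; rfl)), (hmax 1).mpr (h 1 (by right; rfl)), ?_⟩
      intro p hp _ σ hσ
      simp only [mul_zero, add_zero, zero_mul]
      nlinarith [hσ.1, hσ.2]
  · constructor
    · intro h; exact h 1 (by right; rfl)
    · intro h θ hθ
      rcases hθ with rfl | hθ
      · exact hmono h
      · rcases hθ with rfl; exact h
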